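/- Let X take values in a finite set 𝒳, with true propensity p: 𝒳 → (0,1) and model propensity Q: 𝒳 → (0,1). Suppose Q is miscalibrated at level q', i.e., there exists q' in the range of Q with P(T=1 | Q(X)=q') ≠ q'. Define the outcome Y = T·𝟙[Q(X)=q']. Then the IPTW estimand based on Q equals P(T=1 | Q(X)=q')·P(Q(X)=q')/q', while the true ATE equals P(Q(X)=q'); hence the IPTW estimand differs from the true ATE. -/

import Mathlib

open scoped Classical

/-- Finite 𝒳, true propensity p(x)=P(T=1|X=x) ∈ (0,1), model Q : 𝒳 → (0,1).
Suppose Q is miscalibrated at a level q' in its range: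
P(T=1 | Q(X)=q') ≠ q'.  With outcome Y = T·𝟙[Q(X)=q'], the IPTW estimand
equals P(T=1|Q(X)=q')·P(Q(X)=q')/q' while the true ATE equals P(Q(X)=q');
hence the two differ. -/
theorem miscalibrated_IPTW_differs {𝒳 : Type*} [Fintype 𝒳]
    (pX p Q : 𝒳 → ℝ)
    (hpX : ∀ x, 0 < pX x) (hsum : ∑ x, pX x = 1)
    (hp : ∀ x, 0 < p x ∧ p x < 1) (hQ : ∀ x, 0 < Q x ∧ Q x < 1)
    (q' : ℝ) (hq'range : ∃ x, Q x = q')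
    -- P(Q(X) = q') and P(T=1 | Q(X) = q')
    (PB PT1B : ℝ)
    (hPB : PB = ∑ x ∈ Finset.univ.filter (fun x => Q x = q'), pX x)
    (hPT1B : PT1B = (∑ x ∈ Finset.univ.filter (fun x => Q x = q'), p x * pX x) / PB)
    (hmis : PT1B ≠ q')
    -- outcome Y = T · 𝟙[Q(X) = q'] (deterministic given (X, T))
    (y : 𝒳 → Bool → ℝ)
    (hy : ∀ x t, y x t = if t = true ∧ Q x = q' then 1 else 0) :
    -- IPTW estimand, true ATE, and their disagreement
    (∑ x, pX x * (p x * y x true / Q x - (1 - p x) * y x false / (1 - Q x)))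
        = PT1B * PB / q' ∧
    (∑ x, (y x true - y x false) * pX x) = PB ∧
    (∑ x, pX x * (p x * y x true / Q x - (1 - p x) * y x false / (1 - Q x)))
        ≠ (∑ x, (y x true - y x false) * pX x) := by
  obtain ⟨x₀, hx₀⟩ := hq'range
  have hq'pos : 0 < q' := hx₀ ▸ (hQ x₀).1
  have hPBpos : 0 < PB := by
    rw [hPB]
    apply Finset.sum_pos (fun x _ => hpX x)
    exact ⟨x₀, Finset.mem_filter.mpr ⟨Finset.mem_univ _, hx₀⟩⟩
  have hIPTW : (∑ x, pX x * (p x * y x true / Q x - (1 - p x) * y x false / (1 - Q x)))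
      = PT1B * PB / q' := by
    have h1 : ∀ x : 𝒳, pX x * (p x * y x true / Q x - (1 - p x) * y x false / (1 - Q x))
        = if Q x = q' then p x * pX x / q' else 0 := by
      intro x
      rw [hy, hy]
      by_cases h : Q x = q'
      · simp [h]; ring
      · simp [h]
    rw [Finset.sum_congr rfl (fun x _ => h1 x), ← Finset.sum_filter,
      hPT1B, div_mul_cancel₀ _ (ne_of_gt hPBpos), ← Finset.sum_div]
  have hATE : (∑ x, (y x true - y x false) * pX x) = PB := by
    have h2 : ∀ x : 𝒳, (y x true - y x false) * pX x
        = if Q x = q' then pX x else 0 := by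
      intro x
      rw [hy, hy]
      by_cases h : Q x = q' <;> simp [h]
    rw [Finset.sum_congr rfl (fun x _ => h2 x), ← Finset.sum_filter, hPB]
  refine ⟨hIPTW, hATE, ?_⟩
  rw [hIPTW, hATE]
  intro h
  apply hmis
  field_simp at h
  exact h
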